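/- HA proves the ∃-translations of its own axioms: HA ⊢ A^∃ for every axiom A of HA (in particular HA proves each translated induction instance P(0) ∧ (¬∃α ¬(P(α) → P(Sα))) → ¬∃α ¬P(α)); consequently, every formula provable in HA^∃ is provable in HA. -/

import Mathlib

/-! ## First-order terms of the language of arithmetic {0, S, +, ·, =} -/

inductive Trm : Type
  | var : ℕ → Trm
  | zero : Trm
  | succ : Trm → Trm
  | plus : Trm → Trm → Trm
  | times : Trm → Trm → Trm
  deriving DecidableEq

/-- The numeral `S (S ... (S 0))`. -/
def numeral : ℕ → Trm
  | 0 => .zero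
  | n + 1 => .succ (numeral n)

/-- Free (first-order) variables of a term. -/
def Trm.fv : Trm → Finset ℕ
  | .var n => {n}
  | .zero => ∅
  | .succ t => t.fv
  | .plus s t => s.fv ∪ t.fv
  | .times s t => s.fv ∪ t.fv

def Trm.Closed (t : Trm) : Prop := t.fv = ∅

/-- Substitution `t[m/α]` of the term `m` for the variable `α`. -/
def Trm.subst : Trm → ℕ → Trm → Trm
  | .var n, α, m => if n = α then m else .var n
  | .zero, _, _ => .zero
  | .succ t, α, m => .succ (t.subst α m)
  | .plus s t, α, m => .plus (s.subst α m) (t.subst α m)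
  | .times s t, α, m => .times (s.subst α m) (t.subst α m)

/-- Evaluation in the standard model, under an environment. -/
def Trm.eval (ρ : ℕ → ℕ) : Trm → ℕ
  | .var n => ρ n
  | .zero => 0
  | .succ t => t.eval ρ + 1
  | .plus s t => s.eval ρ + t.eval ρ
  | .times s t => s.eval ρ * t.eval ρ

/-! ## Formulas.  Atomic (decidable) predicates are signed equations:
`atom true s t` is `s = t` and `atom false s t` is `s ≠ t`; the complement `P⊥`
just flips the sign. -/

inductive Formula : Type
  | atom : Bool → Trm → Trm → Formula
  | and : Formula → Formula → Formula
  | or : Formula → Formula → Formula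
  | imp : Formula → Formula → Formula
  | all : ℕ → Formula → Formula
  | ex : ℕ → Formula → Formula
  deriving DecidableEq

/-- Falsum, as the (atomically false) atom `0 = S 0`. -/
def Formula.bot : Formula := .atom true .zero (.succ .zero)

/-- Negation `¬A := A → ⊥`. -/
def Formula.neg (A : Formula) : Formula := .imp A .bot

def Formula.IsAtom : Formula → Prop
  | .atom _ _ _ => True
  | _ => False

/-- The complement `P⊥` of an atomic predicate. -/
def Formula.compl : Formula → Formula
  | .atom b s t => .atom (!b) s t
  | A => A

def Formula.fv : Formula → Finset ℕ
  | .atom _ s t => s.fv ∪ t.fv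
  | .and A B => A.fv ∪ B.fv
  | .or A B => A.fv ∪ B.fv
  | .imp A B => A.fv ∪ B.fv
  | .all α A => A.fv.erase α
  | .ex α A => A.fv.erase α

def Formula.Closed (A : Formula) : Prop := A.fv = ∅

/-- Substitution `A[m/α]` of a first-order term for a first-order variable. -/
def Formula.subst : Formula → ℕ → Trm → Formula
  | .atom b s t, α, m => .atom b (s.subst α m) (t.subst α m)
  | .and A B, α, m => .and (A.subst α m) (B.subst α m)
  | .or A B, α, m => .or (A.subst α m) (B.subst α m)
  | .imp A B, α, m => .imp (A.subst α m) (B.subst α m)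
  | .all β A, α, m => if β = α then .all β A else .all β (A.subst α m)
  | .ex β A, α, m => if β = α then .ex β A else .ex β (A.subst α m)

/-- Truth value of an atomic formula under an environment. -/
def Formula.atomVal (ρ : ℕ → ℕ) : Formula → Bool
  | .atom b s t => (s.eval ρ == t.eval ρ) == b
  | _ => false

/-- Truth value of a *closed* atomic formula (`P ⇓ True` / `P ⇓ False`). -/
def Formula.atomTrue (P : Formula) : Bool := P.atomVal (fun _ => 0)

/-! ## Natural deduction, parametrized by an axiom schema `axs` and by a
(restricted) excluded-middle rule `emr B₁ B₂ C`, meaning: from `Γ, B₁ ⊢ C` and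
`Γ, B₂ ⊢ C` infer `Γ ⊢ C`. -/

inductive Deriv (axs : Formula → Prop) (emr : Formula → Formula → Formula → Prop) :
    List Formula → Formula → Prop
  | hyp {Γ A} : A ∈ Γ → Deriv axs emr Γ A
  | ax {Γ A} : axs A → Deriv axs emr Γ A
  | andI {Γ A B} : Deriv axs emr Γ A → Deriv axs emr Γ B → Deriv axs emr Γ (.and A B)
  | andE1 {Γ A B} : Deriv axs emr Γ (.and A B) → Deriv axs emr Γ A
  | andE2 {Γ A B} : Deriv axs emr Γ (.and A B) → Deriv axs emr Γ B
  | impI {Γ A B} : Deriv axs emr (A :: Γ) B → Deriv axs emr Γ (.imp A B)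
  | impE {Γ A B} : Deriv axs emr Γ (.imp A B) → Deriv axs emr Γ A → Deriv axs emr Γ B
  | orI1 {Γ A B} : Deriv axs emr Γ A → Deriv axs emr Γ (.or A B)
  | orI2 {Γ A B} : Deriv axs emr Γ B → Deriv axs emr Γ (.or A B)
  | orE {Γ A B C} : Deriv axs emr Γ (.or A B) → Deriv axs emr (A :: Γ) C →
      Deriv axs emr (B :: Γ) C → Deriv axs emr Γ C
  | allI {Γ α A} : Deriv axs emr Γ A → (∀ B ∈ Γ, α ∉ B.fv) → Deriv axs emr Γ (.all α A)
  | allE {Γ α A} (m : Trm) : Deriv axs emr Γ (.all α A) → Deriv axs emr Γ (A.subst α m)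
  | exI {Γ α A} (m : Trm) : Deriv axs emr Γ (A.subst α m) → Deriv axs emr Γ (.ex α A)
  | exE {Γ α A C} : Deriv axs emr Γ (.ex α A) → Deriv axs emr (A :: Γ) C →
      α ∉ C.fv → (∀ B ∈ Γ, α ∉ B.fv) → Deriv axs emr Γ C
  | botE {Γ A} : Deriv axs emr Γ Formula.bot → Deriv axs emr Γ A
  | em {Γ B₁ B₂ C} : emr B₁ B₂ C → Deriv axs emr (B₁ :: Γ) C →
      Deriv axs emr (B₂ :: Γ) C → Deriv axs emr Γ C

/-- No excluded-middle rule at all (pure intuitionistic logic). -/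
def noEM : Formula → Formula → Formula → Prop := fun _ _ _ => False

/-- The full classical rule EM: cases `A` / `¬A`, arbitrary conclusion. -/
def fullEM : Formula → Formula → Formula → Prop := fun B₁ B₂ _ => B₂ = B₁.neg

/-- The rule EM⁻: cases `A` / `¬A` for arbitrary `A`, but the conclusion must be
a simply existential (Σ⁰₁) formula `∃x P` with `P` atomic. -/
def emMinus : Formula → Formula → Formula → Prop := fun B₁ B₂ C =>
  B₂ = B₁.neg ∧ ∃ x P, P.IsAtom ∧ C = .ex x P

/-- The rule EM₁⁻: cases `∀α P` / `∃α P⊥` with `P` atomic, conclusion a simply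
existential formula `∃x Q` with `Q` atomic. -/
def em1Minus : Formula → Formula → Formula → Prop := fun B₁ B₂ C =>
  ∃ α P, P.IsAtom ∧ B₁ = .all α P ∧ B₂ = .ex α P.compl ∧ ∃ x Q, Q.IsAtom ∧ C = .ex x Q

/-! ## The axioms of (Heyting/Peano) arithmetic -/

inductive HAAxiom : Formula → Prop
  | eqRefl : HAAxiom (.all 0 (.atom true (.var 0) (.var 0)))
  | eqSym : HAAxiom (.all 0 (.all 1 (.imp (.atom true (.var 0) (.var 1))
      (.atom true (.var 1) (.var 0)))))
  | eqTrans : HAAxiom (.all 0 (.all 1 (.all 2 (.imp (.atom true (.var 0) (.var 1))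
      (.imp (.atom true (.var 1) (.var 2)) (.atom true (.var 0) (.var 2)))))))
  | succCong : HAAxiom (.all 0 (.all 1 (.imp (.atom true (.var 0) (.var 1))
      (.atom true (.succ (.var 0)) (.succ (.var 1))))))
  | succInj : HAAxiom (.all 0 (.all 1 (.imp (.atom true (.succ (.var 0)) (.succ (.var 1)))
      (.atom true (.var 0) (.var 1)))))
  | succNeZero : HAAxiom (.all 0 (.imp (.atom true (.succ (.var 0)) .zero) Formula.bot))
  | plusZero : HAAxiom (.all 0 (.atom true (.plus (.var 0) .zero) (.var 0)))
  | plusSucc : HAAxiom (.all 0 (.all 1 (.atom true (.plus (.var 0) (.succ (.var 1)))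
      (.succ (.plus (.var 0) (.var 1))))))
  | timesZero : HAAxiom (.all 0 (.atom true (.times (.var 0) .zero) .zero))
  | timesSucc : HAAxiom (.all 0 (.all 1 (.atom true (.times (.var 0) (.succ (.var 1)))
      (.plus (.times (.var 0) (.var 1)) (.var 0)))))
  /-- The induction schema `∀α (A(α) → A(Sα)) → A(0) → ∀α A(α)`. -/
  | ind (A : Formula) (α : ℕ) : HAAxiom (.imp (.all α (.imp A (A.subst α (.succ (.var α)))))
      (.imp (A.subst α .zero) (.all α A)))
  /-- Decidability of atomic predicates: `P ∨ P⊥`. -/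
  | atomDec (b : Bool) (s t : Trm) : HAAxiom (.or (.atom b s t) (.atom (!b) s t))
  /-- `P⊥ → ¬P`. -/
  | complIntro (b : Bool) (s t : Trm) :
      HAAxiom (.imp (.atom (!b) s t) (Formula.neg (.atom b s t)))
  /-- `¬P → P⊥`. -/
  | complElim (b : Bool) (s t : Trm) :
      HAAxiom (.imp (Formula.neg (.atom b s t)) (.atom (!b) s t))

/-- Markov's principle as an axiom schema: `¬∀α P → ∃α P⊥` for atomic `P`. -/
def MRK : Formula → Prop := fun F =>
  ∃ (α : ℕ) (b : Bool) (s t : Trm),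
    F = .imp (Formula.neg (.all α (.atom b s t))) (.ex α (.atom (!b) s t))

/-! ## Translations -/

/-- The Gödel–Gentzen negative translation. -/
def Formula.ggN : Formula → Formula
  | .atom b s t => Formula.neg (Formula.neg (.atom b s t))
  | .and A B => .and A.ggN B.ggN
  | .or A B => Formula.neg (.and (Formula.neg A.ggN) (Formula.neg B.ggN))
  | .imp A B => .imp A.ggN B.ggN
  | .all α A => .all α A.ggN
  | .ex α A => Formula.neg (.all α (Formula.neg A.ggN))

/-- The ∃-translation: the identity on atoms, commuting with `∧`, `∨`, `→`, `∃`,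
and `(∀x F)^∃ = ¬∃x ¬F^∃`. -/
def Formula.exT : Formula → Formula
  | .atom b s t => .atom b s t
  | .and A B => .and A.exT B.exT
  | .or A B => .or A.exT B.exT
  | .imp A B => .imp A.exT B.exT
  | .all α A => Formula.neg (.ex α (Formula.neg A.exT))
  | .ex α A => .ex α A.exT

/-- The axioms of `HA^∃` / `PA^∃`: the ∃-translations of the axioms of HA/PA. -/
def HAAxiomExT : Formula → Prop := fun A => ∃ B, HAAxiom B ∧ A = B.exT

/-! ### Auxiliary lemmas -/

lemma Trm.subst_self (t : Trm) (α : ℕ) : t.subst α (.var α) = t := by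
  induction t with
  | var n => by_cases h : n = α <;> simp [Trm.subst, h]
  | zero => rfl
  | succ t ih => simp [Trm.subst, ih]
  | plus s t ihs iht => simp [Trm.subst, ihs, iht]
  | times s t ihs iht => simp [Trm.subst, ihs, iht]

lemma Formula.subst_self (A : Formula) (α : ℕ) : A.subst α (.var α) = A := by
  induction A with
  | atom b s t => simp [Formula.subst, Trm.subst_self]
  | and A B ihA ihB => simp [Formula.subst, ihA, ihB]
  | or A B ihA ihB => simp [Formula.subst, ihA, ihB]
  | imp A B ihA ihB => simp [Formula.subst, ihA, ihB]
  | all β A ih => by_cases h : β = α <;> simp [Formula.subst, h, ih]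
  | ex β A ih => by_cases h : β = α <;> simp [Formula.subst, h, ih]

lemma Formula.bot_subst (α : ℕ) (m : Trm) : Formula.bot.subst α m = Formula.bot := rfl

lemma Formula.neg_subst (A : Formula) (α : ℕ) (m : Trm) :
    (A.neg).subst α m = (A.subst α m).neg := rfl

lemma Formula.exT_subst (A : Formula) (α : ℕ) (m : Trm) :
    (A.subst α m).exT = A.exT.subst α m := by
  induction A with
  | atom b s t => rfl
  | and A B ihA ihB => simp [Formula.subst, Formula.exT, ihA, ihB]
  | or A B ihA ihB => simp [Formula.subst, Formula.exT, ihA, ihB]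
  | imp A B ihA ihB => simp [Formula.subst, Formula.exT, ihA, ihB]
  | all β A ih =>
      by_cases h : β = α <;>
        simp [Formula.subst, Formula.exT, Formula.neg, Formula.bot, Trm.subst, h, ih]
  | ex β A ih =>
      by_cases h : β = α <;> simp [Formula.subst, Formula.exT, h, ih]

lemma Trm.not_mem_fv_subst (t : Trm) (α : ℕ) {m : Trm} (hm : α ∉ m.fv) :
    α ∉ (t.subst α m).fv := by
  induction t with
  | var n =>
      by_cases h : n = α
      · simpa [Trm.subst, h] using hm
      · simp [Trm.subst, h, Trm.fv]; exact fun hc => h hc.symm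
  | zero => simp [Trm.subst, Trm.fv]
  | succ t ih => simpa [Trm.subst, Trm.fv] using ih
  | plus s t ihs iht => simp [Trm.subst, Trm.fv]; exact ⟨ihs, iht⟩
  | times s t ihs iht => simp [Trm.subst, Trm.fv]; exact ⟨ihs, iht⟩

lemma Formula.not_mem_fv_subst (A : Formula) (α : ℕ) {m : Trm} (hm : α ∉ m.fv) :
    α ∉ (A.subst α m).fv := by
  induction A with
  | atom b s t =>
      simp [Formula.subst, Formula.fv]
      exact ⟨Trm.not_mem_fv_subst _ _ hm, Trm.not_mem_fv_subst _ _ hm⟩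
  | and A B ihA ihB => simp [Formula.subst, Formula.fv]; exact ⟨ihA, ihB⟩
  | or A B ihA ihB => simp [Formula.subst, Formula.fv]; exact ⟨ihA, ihB⟩
  | imp A B ihA ihB => simp [Formula.subst, Formula.fv]; exact ⟨ihA, ihB⟩
  | all β A ih =>
      by_cases h : β = α
      · subst h; simp [Formula.subst, Formula.fv]
      · simp [Formula.subst, h, Formula.fv, Finset.mem_erase]
        intro _; exact ih
  | ex β A ih =>
      by_cases h : β = α
      · subst h; simp [Formula.subst, Formula.fv]
      · simp [Formula.subst, h, Formula.fv, Finset.mem_erase]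
        intro _; exact ih
/-- Weakening to any context that contains the old one, provided every new
formula is closed. -/
lemma Deriv.weakenAux {axs emr} {Γ : List Formula} {F : Formula}
    (h : Deriv axs emr Γ F) :
    ∀ Γ' : List Formula, (∀ B ∈ Γ, B ∈ Γ') → (∀ B ∈ Γ', B ∈ Γ ∨ B.fv = ∅) →
      Deriv axs emr Γ' F := by
  induction h with
  | hyp hm => exact fun Γ' h1 _ => .hyp (h1 _ hm)
  | ax ha => exact fun Γ' _ _ => .ax ha
  | andI _ _ ih1 ih2 => exact fun Γ' h1 h2 => .andI (ih1 Γ' h1 h2) (ih2 Γ' h1 h2)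
  | andE1 _ ih => exact fun Γ' h1 h2 => .andE1 (ih Γ' h1 h2)
  | andE2 _ ih => exact fun Γ' h1 h2 => .andE2 (ih Γ' h1 h2)
  | @impI Γ A B _ ih =>
      intro Γ' h1 h2
      refine .impI (ih (A :: Γ') ?_ ?_)
      · intro C hC
        rcases List.mem_cons.1 hC with rfl | hC
        · exact List.mem_cons_self
        · exact List.mem_cons_of_mem _ (h1 _ hC)
      · intro C hC
        rcases List.mem_cons.1 hC with rfl | hC
        · exact Or.inl (List.mem_cons_self)
        · rcases h2 _ hC with hC | hC
          · exact Or.inl (List.mem_cons_of_mem _ hC)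
          · exact Or.inr hC
  | impE _ _ ih1 ih2 => exact fun Γ' h1 h2 => .impE (ih1 Γ' h1 h2) (ih2 Γ' h1 h2)
  | orI1 _ ih => exact fun Γ' h1 h2 => .orI1 (ih Γ' h1 h2)
  | orI2 _ ih => exact fun Γ' h1 h2 => .orI2 (ih Γ' h1 h2)
  | @orE Γ A B C _ _ _ ih ihA ihB =>
      intro Γ' h1 h2
      refine .orE (ih Γ' h1 h2) (ihA (A :: Γ') ?_ ?_) (ihB (B :: Γ') ?_ ?_) <;>
      · intro D hD
        rcases List.mem_cons.1 hD with rfl | hD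
        · first
            | exact List.mem_cons_self
            | exact Or.inl (List.mem_cons_self)
        · first
            | exact List.mem_cons_of_mem _ (h1 _ hD)
            | rcases h2 _ hD with hD | hD
              · exact Or.inl (List.mem_cons_of_mem _ hD)
              · exact Or.inr hD
  | @allI Γ α A _ hfv ih =>
      intro Γ' h1 h2
      refine .allI (ih Γ' h1 h2) ?_
      intro B hB
      rcases h2 _ hB with hB | hB
      · exact hfv _ hB
      · simp [hB]
  | allE m _ ih => exact fun Γ' h1 h2 => .allE m (ih Γ' h1 h2)
  | exI m _ ih => exact fun Γ' h1 h2 => .exI m (ih Γ' h1 h2)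
  | @exE Γ α A C _ _ hC hfv ih ihA =>
      intro Γ' h1 h2
      refine .exE (ih Γ' h1 h2) (ihA (A :: Γ') ?_ ?_) hC ?_
      · intro D hD
        rcases List.mem_cons.1 hD with rfl | hD
        · exact List.mem_cons_self
        · exact List.mem_cons_of_mem _ (h1 _ hD)
      · intro D hD
        rcases List.mem_cons.1 hD with rfl | hD
        · exact Or.inl (List.mem_cons_self)
        · rcases h2 _ hD with hD | hD
          · exact Or.inl (List.mem_cons_of_mem _ hD)
          · exact Or.inr hD
      · intro B hB
        rcases h2 _ hB with hB | hB
        · exact hfv _ hB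
        · simp [hB]
  | botE _ ih => exact fun Γ' h1 h2 => .botE (ih Γ' h1 h2)
  | @em Γ B₁ B₂ C hr _ _ ih1 ih2 =>
      intro Γ' h1 h2
      refine .em hr (ih1 (B₁ :: Γ') ?_ ?_) (ih2 (B₂ :: Γ') ?_ ?_) <;>
      · intro D hD
        rcases List.mem_cons.1 hD with rfl | hD
        · first
            | exact List.mem_cons_self
            | exact Or.inl (List.mem_cons_self)
        · first
            | exact List.mem_cons_of_mem _ (h1 _ hD)
            | rcases h2 _ hD with hD | hD
              · exact Or.inl (List.mem_cons_of_mem _ hD)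
              · exact Or.inr hD

/-! ### Universal closures -/

def closeL : List ℕ → Formula → Formula
  | [], A => A
  | x :: xs, A => .all x (closeL xs A)

lemma closeL_fv (xs : List ℕ) (A : Formula) :
    (closeL xs A).fv = A.fv \ xs.toFinset := by
  induction xs with
  | nil => simp [closeL]
  | cons x xs ih =>
      simp only [closeL, Formula.fv, ih, List.toFinset_cons]
      ext a
      simp [Finset.mem_erase, Finset.mem_sdiff, Finset.mem_insert]
      tauto

lemma closeL_closed (A : Formula) : (closeL A.fv.toList A).fv = ∅ := by
  simp [closeL_fv]

lemma deriv_closeL {axs emr} {A : Formula} (xs : List ℕ)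
    (h : Deriv axs emr [] A) : Deriv axs emr [] (closeL xs A) := by
  induction xs with
  | nil => exact h
  | cons x xs ih => exact .allI ih (by simp)

lemma deriv_closeL_elim {axs emr} {Γ : List Formula} {A : Formula} (xs : List ℕ)
    (h : Deriv axs emr Γ (closeL xs A)) : Deriv axs emr Γ A := by
  induction xs with
  | nil => exact h
  | cons x xs ih =>
      apply ih
      have := Deriv.allE (Trm.var x) h
      rwa [Formula.subst_self] at this
/-! ### Deriving `¬∃α ¬F` from `∀α F` -/

lemma allImpNegEx {axs emr} {Γ : List Formula} (α : ℕ) (F : Formula)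
    (hfv : ∀ G ∈ Γ, α ∉ G.fv) :
    Deriv axs emr Γ (.imp (.all α F) (Formula.neg (.ex α F.neg))) := by
  apply Deriv.impI
  apply Deriv.impI
  refine Deriv.exE (A := F.neg) (α := α) (Deriv.hyp (List.mem_cons_self)) ?_ ?_ ?_
  · refine Deriv.impE (Deriv.hyp (List.mem_cons_self)) ?_
    have := Deriv.allE (axs := axs) (emr := emr)
      (Γ := F.neg :: (Formula.ex α F.neg) :: (Formula.all α F) :: Γ)
      (α := α) (A := F) (Trm.var α) (Deriv.hyp (by simp))
    rwa [Formula.subst_self] at this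
  · simp [Formula.bot, Formula.fv, Trm.fv]
  · intro B hB
    rcases List.mem_cons.1 hB with rfl | hB
    · simp [Formula.fv, Formula.neg, Formula.bot, Trm.fv]
    rcases List.mem_cons.1 hB with rfl | hB
    · simp [Formula.fv]
    · exact hfv _ hB

lemma allNNImpNegEx {axs emr} {Γ : List Formula} (α : ℕ) (F : Formula)
    (hfv : ∀ G ∈ Γ, α ∉ G.fv) :
    Deriv axs emr Γ (.imp (.all α (Formula.neg (Formula.neg F)))
      (Formula.neg (.ex α F.neg))) := by
  apply Deriv.impI
  apply Deriv.impI
  refine Deriv.exE (A := F.neg) (α := α) (Deriv.hyp (List.mem_cons_self)) ?_ ?_ ?_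
  · refine Deriv.impE ?_ (Deriv.hyp (List.mem_cons_self))
    have := Deriv.allE (axs := axs) (emr := emr)
      (Γ := F.neg :: (Formula.ex α F.neg) ::
        (Formula.all α (Formula.neg (Formula.neg F))) :: Γ)
      (α := α) (A := Formula.neg (Formula.neg F)) (Trm.var α) (Deriv.hyp (by simp))
    rwa [Formula.subst_self] at this
  · simp [Formula.bot, Formula.fv, Trm.fv]
  · intro B hB
    rcases List.mem_cons.1 hB with rfl | hB
    · simp [Formula.fv, Formula.neg, Formula.bot, Trm.fv]
    rcases List.mem_cons.1 hB with rfl | hB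
    · simp [Formula.fv]
    · exact hfv _ hB
/-! ### ∃-translations of universally quantified axioms -/

lemma exT_all1 {axs} {M : Formula} (h : Deriv axs noEM [] (.all 0 M)) :
    Deriv axs noEM [] (Formula.neg (.ex 0 M.neg)) :=
  Deriv.impE (allImpNegEx 0 M (by simp)) h

lemma exT_all2 {axs} {M : Formula} (h : Deriv axs noEM [] (.all 0 (.all 1 M))) :
    Deriv axs noEM []
      (Formula.neg (.ex 0 (Formula.neg (Formula.neg (.ex 1 M.neg))))) := by
  have a1 : Deriv axs noEM [] (.all 1 M) := by
    have := Deriv.allE (Trm.var 0) h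
    rwa [Formula.subst_self] at this
  have a2 : Deriv axs noEM [] (Formula.neg (.ex 1 M.neg)) :=
    Deriv.impE (allImpNegEx 1 M (by simp)) a1
  have a3 : Deriv axs noEM [] (.all 0 (Formula.neg (.ex 1 M.neg))) :=
    Deriv.allI a2 (by simp)
  exact Deriv.impE (allImpNegEx 0 _ (by simp)) a3

lemma exT_all3 {axs} {M : Formula}
    (h : Deriv axs noEM [] (.all 0 (.all 1 (.all 2 M)))) :
    Deriv axs noEM []
      (Formula.neg (.ex 0 (Formula.neg (Formula.neg
        (.ex 1 (Formula.neg (Formula.neg (.ex 2 M.neg)))))))) := by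
  have a1 : Deriv axs noEM [] (.all 1 (.all 2 M)) := by
    have := Deriv.allE (Trm.var 0) h
    rwa [Formula.subst_self] at this
  have a2 : Deriv axs noEM [] (.all 2 M) := by
    have := Deriv.allE (Trm.var 1) a1
    rwa [Formula.subst_self] at this
  have b2 : Deriv axs noEM [] (Formula.neg (.ex 2 M.neg)) :=
    Deriv.impE (allImpNegEx 2 M (by simp)) a2
  have b2' : Deriv axs noEM [] (.all 1 (Formula.neg (.ex 2 M.neg))) :=
    Deriv.allI b2 (by simp)
  have c : Deriv axs noEM []
      (Formula.neg (.ex 1 (Formula.neg (Formula.neg (.ex 2 M.neg))))) :=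
    Deriv.impE (allImpNegEx 1 _ (by simp)) b2'
  have c' : Deriv axs noEM []
      (.all 0 (Formula.neg (.ex 1 (Formula.neg (Formula.neg (.ex 2 M.neg)))))) :=
    Deriv.allI c (by simp)
  exact Deriv.impE (allImpNegEx 0 _ (by simp)) c'
/-! ### The ∃-translation of the induction schema -/

lemma ind_exT (B : Formula) (α : ℕ) :
    Deriv HAAxiom noEM []
      (.imp (Formula.neg (.ex α (Formula.neg (.imp B (B.subst α (.succ (.var α)))))))
        (.imp (B.subst α .zero) (Formula.neg (.ex α (Formula.neg B))))) := by
  apply Deriv.impI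
  apply Deriv.impI
  have hfv2 : ∀ G ∈ ([B.subst α .zero,
      Formula.neg (.ex α (Formula.neg (.imp B (B.subst α (.succ (.var α))))))] :
      List Formula), α ∉ G.fv := by
    intro G hG
    rcases List.mem_cons.1 hG with rfl | hG
    · exact Formula.not_mem_fv_subst B α (by simp [Trm.fv])
    rcases List.mem_cons.1 hG with rfl | hG
    · simp [Formula.fv, Formula.neg, Formula.bot, Trm.fv]
    · simp at hG
  have D1 : Deriv HAAxiom noEM
      [B.subst α .zero,
        Formula.neg (.ex α (Formula.neg (.imp B (B.subst α (.succ (.var α))))))]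
      (.all α (.imp (Formula.neg (Formula.neg B))
        ((Formula.neg (Formula.neg B)).subst α (.succ (.var α))))) := by
    refine Deriv.allI ?_ hfv2
    apply Deriv.impI
    show Deriv _ _ _ (.imp (Formula.neg (B.subst α (.succ (.var α)))) Formula.bot)
    apply Deriv.impI
    refine Deriv.impE
      (Deriv.hyp (show Formula.neg
        (.ex α (Formula.neg (.imp B (B.subst α (.succ (.var α)))))) ∈ _ by simp)) ?_
    refine Deriv.exI (Trm.var α) ?_
    rw [Formula.subst_self]
    apply Deriv.impI
    refine Deriv.impE
      (Deriv.hyp (show Formula.neg (Formula.neg B) ∈ _ by simp)) ?_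
    apply Deriv.impI
    exact Deriv.impE
      (Deriv.hyp (show Formula.neg (B.subst α (.succ (.var α))) ∈ _ by simp))
      (Deriv.impE
        (Deriv.hyp (show Formula.imp B (B.subst α (.succ (.var α))) ∈ _ by simp))
        (Deriv.hyp (show B ∈ _ by simp)))
  have D2 : Deriv HAAxiom noEM
      [B.subst α .zero,
        Formula.neg (.ex α (Formula.neg (.imp B (B.subst α (.succ (.var α))))))]
      ((Formula.neg (Formula.neg B)).subst α .zero) := by
    show Deriv _ _ _ (.imp (Formula.neg (B.subst α .zero)) Formula.bot)
    apply Deriv.impI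
    exact Deriv.impE
      (Deriv.hyp (show Formula.neg (B.subst α .zero) ∈ _ by simp))
      (Deriv.hyp (show B.subst α .zero ∈ _ by simp))
  have D3 := Deriv.impE
    (Deriv.impE (Deriv.ax (HAAxiom.ind (Formula.neg (Formula.neg B)) α)) D1) D2
  exact Deriv.impE (allNNImpNegEx α B hfv2) D3
/-! ### Part 1: HA proves the ∃-translations of its axioms -/

lemma ha_part1 (A : Formula) (hA : HAAxiom A) : Deriv HAAxiom noEM [] A.exT := by
  cases hA with
  | eqRefl => exact exT_all1 (Deriv.ax .eqRefl)
  | eqSym => exact exT_all2 (Deriv.ax .eqSym)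
  | eqTrans => exact exT_all3 (Deriv.ax .eqTrans)
  | succCong => exact exT_all2 (Deriv.ax .succCong)
  | succInj => exact exT_all2 (Deriv.ax .succInj)
  | succNeZero => exact exT_all1 (Deriv.ax .succNeZero)
  | plusZero => exact exT_all1 (Deriv.ax .plusZero)
  | plusSucc => exact exT_all2 (Deriv.ax .plusSucc)
  | timesZero => exact exT_all1 (Deriv.ax .timesZero)
  | timesSucc => exact exT_all2 (Deriv.ax .timesSucc)
  | ind A α =>
      simp only [Formula.exT, Formula.exT_subst]
      exact ind_exT A.exT α
  | atomDec b s t => exact Deriv.ax (.atomDec b s t)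
  | complIntro b s t => exact Deriv.ax (.complIntro b s t)
  | complElim b s t => exact Deriv.ax (.complElim b s t)

/-! ### Part 2: simulation of HA^∃ inside HA -/

lemma Deriv.weakenApp {axs emr} {Γ Δ Δ' : List Formula} {F : Formula}
    (h : Deriv axs emr (Γ ++ Δ) F) (hsub : ∀ B ∈ Δ, B ∈ Δ')
    (hcl : ∀ B ∈ Δ', B.fv = ∅) : Deriv axs emr (Γ ++ Δ') F := by
  refine h.weakenAux _ ?_ ?_
  · intro B hB
    rcases List.mem_append.1 hB with hB | hB
    · exact List.mem_append.2 (Or.inl hB)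
    · exact List.mem_append.2 (Or.inr (hsub _ hB))
  · intro B hB
    rcases List.mem_append.1 hB with hB | hB
    · exact Or.inl (List.mem_append.2 (Or.inl hB))
    · exact Or.inr (hcl _ hB)

lemma ha_part2aux {Γ : List Formula} {F : Formula}
    (h : Deriv HAAxiomExT noEM Γ F) :
    ∃ Δ : List Formula, (∀ D ∈ Δ, D.fv = ∅ ∧ Deriv HAAxiom noEM [] D) ∧
      Deriv HAAxiom noEM (Γ ++ Δ) F := by
  induction h with
  | hyp hm => exact ⟨[], by simp, .hyp (by simp [hm])⟩
  | ax ha =>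
      obtain ⟨B, hB, rfl⟩ := ha
      refine ⟨[closeL B.exT.fv.toList B.exT], ?_, ?_⟩
      · intro D hD
        rcases List.mem_singleton.1 hD with rfl
        exact ⟨closeL_closed _, deriv_closeL _ (ha_part1 B hB)⟩
      · exact deriv_closeL_elim B.exT.fv.toList
          (.hyp (List.mem_append.2 (Or.inr (List.mem_singleton.2 rfl))))
  | andI h1 h2 ih1 ih2 =>
      obtain ⟨Δ1, p1, d1⟩ := ih1
      obtain ⟨Δ2, p2, d2⟩ := ih2
      have hcl : ∀ B ∈ Δ1 ++ Δ2, B.fv = ∅ := by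
        intro B hB
        rcases List.mem_append.1 hB with hB | hB
        · exact (p1 _ hB).1
        · exact (p2 _ hB).1
      refine ⟨Δ1 ++ Δ2, ?_, ?_⟩
      · intro D hD
        rcases List.mem_append.1 hD with hD | hD
        · exact p1 _ hD
        · exact p2 _ hD
      · exact .andI (d1.weakenApp (by intro B hB; simp [hB]) hcl)
          (d2.weakenApp (by intro B hB; simp [hB]) hcl)
  | andE1 _ ih =>
      obtain ⟨Δ, p, d⟩ := ih; exact ⟨Δ, p, .andE1 d⟩
  | andE2 _ ih =>
      obtain ⟨Δ, p, d⟩ := ih; exact ⟨Δ, p, .andE2 d⟩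
  | impI _ ih =>
      obtain ⟨Δ, p, d⟩ := ih; exact ⟨Δ, p, .impI d⟩
  | impE h1 h2 ih1 ih2 =>
      obtain ⟨Δ1, p1, d1⟩ := ih1
      obtain ⟨Δ2, p2, d2⟩ := ih2
      have hcl : ∀ B ∈ Δ1 ++ Δ2, B.fv = ∅ := by
        intro B hB
        rcases List.mem_append.1 hB with hB | hB
        · exact (p1 _ hB).1
        · exact (p2 _ hB).1
      refine ⟨Δ1 ++ Δ2, ?_, ?_⟩
      · intro D hD
        rcases List.mem_append.1 hD with hD | hD
        · exact p1 _ hD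
        · exact p2 _ hD
      · exact .impE (d1.weakenApp (by intro B hB; simp [hB]) hcl)
          (d2.weakenApp (by intro B hB; simp [hB]) hcl)
  | orI1 _ ih =>
      obtain ⟨Δ, p, d⟩ := ih; exact ⟨Δ, p, .orI1 d⟩
  | orI2 _ ih =>
      obtain ⟨Δ, p, d⟩ := ih; exact ⟨Δ, p, .orI2 d⟩
  | orE _ _ _ ih ihA ihB =>
      obtain ⟨Δ1, p1, d1⟩ := ih
      obtain ⟨Δ2, p2, d2⟩ := ihA
      obtain ⟨Δ3, p3, d3⟩ := ihB
      have hcl : ∀ B ∈ Δ1 ++ Δ2 ++ Δ3, B.fv = ∅ := by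
        intro B hB
        rcases List.mem_append.1 hB with hB | hB
        · rcases List.mem_append.1 hB with hB | hB
          · exact (p1 _ hB).1
          · exact (p2 _ hB).1
        · exact (p3 _ hB).1
      refine ⟨Δ1 ++ Δ2 ++ Δ3, ?_, ?_⟩
      · intro D hD
        rcases List.mem_append.1 hD with hD | hD
        · rcases List.mem_append.1 hD with hD | hD
          · exact p1 _ hD
          · exact p2 _ hD
        · exact p3 _ hD
      · exact .orE (d1.weakenApp (by intro B hB; simp [hB]) hcl)
          (d2.weakenApp (by intro B hB; simp [hB]) hcl)
          (d3.weakenApp (by intro B hB; simp [hB]) hcl)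
  | allI _ hfv ih =>
      obtain ⟨Δ, p, d⟩ := ih
      refine ⟨Δ, p, .allI d ?_⟩
      intro B hB
      rcases List.mem_append.1 hB with hB | hB
      · exact hfv _ hB
      · simp [(p _ hB).1]
  | allE m _ ih =>
      obtain ⟨Δ, p, d⟩ := ih; exact ⟨Δ, p, .allE m d⟩
  | exI m _ ih =>
      obtain ⟨Δ, p, d⟩ := ih; exact ⟨Δ, p, .exI m d⟩
  | exE _ _ hC hfv ih ihA =>
      obtain ⟨Δ1, p1, d1⟩ := ih
      obtain ⟨Δ2, p2, d2⟩ := ihA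
      have hcl : ∀ B ∈ Δ1 ++ Δ2, B.fv = ∅ := by
        intro B hB
        rcases List.mem_append.1 hB with hB | hB
        · exact (p1 _ hB).1
        · exact (p2 _ hB).1
      refine ⟨Δ1 ++ Δ2, ?_, ?_⟩
      · intro D hD
        rcases List.mem_append.1 hD with hD | hD
        · exact p1 _ hD
        · exact p2 _ hD
      · refine .exE (d1.weakenApp (by intro B hB; simp [hB]) hcl)
          (d2.weakenApp (Γ := _ :: _) (by intro B hB; simp [hB]) hcl) hC ?_
        intro B hB
        rcases List.mem_append.1 hB with hB | hB
        · exact hfv _ hB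
        · simp [hcl _ hB]
  | botE _ ih =>
      obtain ⟨Δ, p, d⟩ := ih; exact ⟨Δ, p, .botE d⟩
  | em hr _ _ _ _ => exact False.elim hr

lemma ha_discharge {axs} :
    ∀ (Δ : List Formula) {F : Formula},
      (∀ D ∈ Δ, D.fv = ∅ ∧ Deriv axs noEM [] D) →
      Deriv axs noEM Δ F → Deriv axs noEM [] F := by
  intro Δ
  induction Δ with
  | nil => exact fun _ h => h
  | cons D Δ ih =>
      intro F hp h
      have h1 : Deriv axs noEM Δ (.imp D F) := .impI h
      have hD : Deriv axs noEM Δ D :=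
        (hp D (by simp)).2.weakenAux Δ (by simp)
          (fun B hB => Or.inr (hp B (by simp [hB])).1)
      exact ih (fun B hB => hp B (by simp [hB])) (h1.impE hD)
/-- **HA proves the ∃-translations of its own axioms**, and consequently every
formula provable in `HA^∃` is provable in HA. -/
theorem ha_proves_exT_axioms :
    (∀ A : Formula, HAAxiom A → Deriv HAAxiom noEM [] A.exT) ∧
    (∀ F : Formula, Deriv HAAxiomExT noEM [] F → Deriv HAAxiom noEM [] F) := by
  refine ⟨ha_part1, ?_⟩
  intro F h
  obtain ⟨Δ, hΔ, hd⟩ := ha_part2aux h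
  exact ha_discharge Δ hΔ hd
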